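/- Let Γ be a non-complete edge-regular graph with parameters (v,k,λ) and k ≥ 1. Then v + λ − 2k ≥ 0, and equality holds if and only if Γ is a complete multipartite graph. -/

import Mathlib

open scoped Classical
open Matrix

variable {V : Type*}

/-- `G` is edge-regular with parameters `(v, k, l)`: it has `v` vertices, every vertex has
degree `k`, and every pair of adjacent vertices has exactly `l` common neighbours. -/
def IsEdgeRegular [Fintype V] (G : SimpleGraph V) (v k l : ℕ) : Prop :=
  Fintype.card V = v ∧ G.IsRegularOfDegree k ∧
    ∀ x y : V, G.Adj x y → Fintype.card (G.commonNeighbors x y) = l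

/-- `C` is an `e`-regular clique of `G` (for `e > 0`): a clique such that every vertex
outside `C` is adjacent to exactly `e` vertices of `C`. -/
def IsRegularCliqueWith [Fintype V] (G : SimpleGraph V) (C : Finset V) (e : ℕ) : Prop :=
  G.IsClique ↑C ∧ 0 < e ∧ ∀ x : V, x ∉ C → (C.filter (fun y => G.Adj x y)).card = e

/-- A Neumaier graph: a non-complete edge-regular graph containing a regular clique. -/
def IsNeumaier [Fintype V] (G : SimpleGraph V) : Prop :=
  (∃ v k l : ℕ, IsEdgeRegular G v k l) ∧ G ≠ ⊤ ∧ ∃ (C : Finset V) (e : ℕ), IsRegularCliqueWith G C e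

/-- A graph is complete multipartite when non-adjacency (together with equality) is
a transitive relation on the vertices. -/
def IsCompleteMultipartite (G : SimpleGraph V) : Prop :=
  ∀ x y z : V, ¬G.Adj x y → ¬G.Adj y z → ¬G.Adj x z

/-- `θ` is a (real) eigenvalue of the adjacency matrix of `G`. -/
def IsAdjEigenvalue [Fintype V] (G : SimpleGraph V) (θ : ℝ) : Prop :=
  ∃ f : V → ℝ, f ≠ 0 ∧ G.adjMatrix ℝ *ᵥ f = θ • f

/-- The average, over all edges of `G`, of the number of common neighbours of the
two endpoints of the edge. -/
noncomputable def avgLambda [Fintype V] (G : SimpleGraph V) : ℝ :=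
  (∑ ed ∈ G.edgeFinset, Sym2.lift
      ⟨fun x y => ((G.commonNeighbors x y).ncard : ℝ),
       fun x y => by dsimp only; rw [SimpleGraph.commonNeighbors_symm]⟩ ed) / (G.edgeFinset.card : ℝ)

open SimpleGraph Finset

/-- For a non-complete edge-regular graph with parameters `(v, k, l)` and
`k ≥ 1`, we have `v + l - 2k ≥ 0`, with equality if and only if the graph is a complete
multipartite graph. -/
theorem stmt0 [Fintype V] (G : SimpleGraph V) (v k l : ℕ)
    (hER : IsEdgeRegular G v k l) (hk : 1 ≤ k) (hnc : G ≠ ⊤) :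
    0 ≤ (v : ℤ) + l - 2 * k ∧ ((v : ℤ) + l - 2 * k = 0 ↔ _root_.IsCompleteMultipartite G) := by
  obtain ⟨hv, hreg, hl⟩ := hER
  have key : ∀ x y : V, G.Adj x y →
      (G.neighborFinset x ∪ G.neighborFinset y).card + l = 2 * k := by
    intro x y hxy
    have hint : (G.neighborFinset x ∩ G.neighborFinset y).card = l := by
      rw [← hl x y hxy, ← Set.toFinset_card]
      simp [commonNeighbors, @Set.toFinset_inter _ _ _ _ _ _ (_), ← neighborFinset_def]
      congr 1; ext z; rw [Finset.mem_inter, mem_neighborFinset, mem_neighborFinset]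
      convert (Set.mem_toFinset (s := G.neighborSet x ∩ G.neighborSet y) (a := z)).symm
      · exact Iff.rfl
      · have aux : ∀ (s : Set V) (i j : Fintype s), @Set.toFinset V s i = @Set.toFinset V s j :=
          fun s i j => by rw [Subsingleton.elim i j]
        exact aux _ _ _
    rw [← hint, Finset.card_union_add_card_inter, card_neighborFinset_eq_degree,
      card_neighborFinset_eq_degree, hreg x, hreg y, two_mul]
  have hne : Nonempty V := by
    by_contra h
    exact hnc (SimpleGraph.ext (by ext a b; exact absurd ⟨a⟩ h))
  obtain ⟨x0⟩ := hne
  obtain ⟨y0, hy0⟩ : ∃ y, G.Adj x0 y := by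
    have : (G.neighborFinset x0).Nonempty := by
      rw [← Finset.card_pos, card_neighborFinset_eq_degree, hreg x0]; omega
    obtain ⟨y, hy⟩ := this
    exact ⟨y, (mem_neighborFinset _ _ _).1 hy⟩
  have hineq : 2 * k ≤ v + l := by
    have := key x0 y0 hy0
    have hle : (G.neighborFinset x0 ∪ G.neighborFinset y0).card ≤ v := by
      rw [← hv]; exact Finset.card_le_univ _
    omega
  refine ⟨by omega, ?_, ?_⟩
  · intro h0
    have heq : v + l = 2 * k := by omega
    intro a b c hab hbc hac
    have hcov : G.neighborFinset a ∪ G.neighborFinset c = Finset.univ := by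
      apply Finset.eq_univ_of_card
      have := key a c hac
      rw [hv]; omega
    have hb : b ∈ G.neighborFinset a ∪ G.neighborFinset c := by
      rw [hcov]; exact Finset.mem_univ b
    rcases Finset.mem_union.1 hb with h | h
    · exact hab ((mem_neighborFinset _ _ _).1 h)
    · exact hbc (((mem_neighborFinset _ _ _).1 h).symm)
  · intro hCM
    have hcov : G.neighborFinset x0 ∪ G.neighborFinset y0 = Finset.univ := by
      apply Finset.eq_univ_iff_forall.2
      intro w
      by_contra hw
      rw [Finset.mem_union, mem_neighborFinset, mem_neighborFinset] at hw
      push_neg at hw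
      exact (hCM x0 w y0 hw.1 (fun h => hw.2 h.symm)) hy0
    have := key x0 y0 hy0
    rw [hcov, Finset.card_univ, hv] at this
    omega
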